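/- Suppose X, Y, Z : [0, Δ] → [0, ∞) are differentiable and satisfy X' > (1/4) X - ε (Y + Z), |Y'| < ε (X + Y + Z), Z' < -(1/4) Z + ε (X + Y) on [0, Δ], where ε ∈ (0, 1/4) and η > 0 satisfy (1/4 - 2ε) η - (2 + η²) ε > 0 and 1/4 - (1 + η) ε > 0. Define κ = η X - Y - Z. If κ(s') ≥ 0 for some s' ∈ [0, Δ], then κ(s) > 0 for all s ∈ (s', Δ], provided additionally X(s') + Z(s') > 0. -/
import Mathlib

theorem stmt_10 (Δ ε η : ℝ) (hΔ : 0 ≤ Δ) (hε : ε ∈ Set.Ioo (0 : ℝ) (1 / 4)) (hη : 0 < η)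
    (hcone : (1 / 4 - 2 * ε) * η - (2 + η ^ 2) * ε > 0)
    (hcone' : 1 / 4 - (1 + η) * ε > 0)
    (X Y Z X' Y' Z' : ℝ → ℝ)
    (hXpos : ∀ s ∈ Set.Icc 0 Δ, 0 ≤ X s) (hYpos : ∀ s ∈ Set.Icc 0 Δ, 0 ≤ Y s)
    (hZpos : ∀ s ∈ Set.Icc 0 Δ, 0 ≤ Z s)
    (hdX : ∀ s ∈ Set.Icc 0 Δ, HasDerivAt X (X' s) s)
    (hdY : ∀ s ∈ Set.Icc 0 Δ, HasDerivAt Y (Y' s) s)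
    (hdZ : ∀ s ∈ Set.Icc 0 Δ, HasDerivAt Z (Z' s) s)
    (hX' : ∀ s ∈ Set.Icc 0 Δ, X' s > 1 / 4 * X s - ε * (Y s + Z s))
    (hY' : ∀ s ∈ Set.Icc 0 Δ, |Y' s| < ε * (X s + Y s + Z s))
    (hZ' : ∀ s ∈ Set.Icc 0 Δ, Z' s < -(1 / 4) * Z s + ε * (X s + Y s))
    (κ : ℝ → ℝ) (hκ : ∀ s, κ s = η * X s - Y s - Z s)
    (s' : ℝ) (hs' : s' ∈ Set.Icc 0 Δ) (hκs' : κ s' ≥ 0) (hXZ : X s' + Z s' > 0) :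
    ∀ s ∈ Set.Ioc s' Δ, κ s > 0 := by
  obtain ⟨hε0, hε4⟩ := hε
  obtain ⟨hs'0, hs'Δ⟩ := hs'
  set K : ℝ → ℝ := fun s => η * X' s - Y' s - Z' s with hKdef
  have hκfun : κ = fun s => η * X s - Y s - Z s := funext hκ
  have hdκ : ∀ s ∈ Set.Icc (0:ℝ) Δ, HasDerivAt κ (K s) s := by
    intro s hs
    rw [hκfun]
    exact (((hdX s hs).const_mul η).sub (hdY s hs)).sub (hdZ s hs)
  have hKpos : ∀ s ∈ Set.Icc (0:ℝ) Δ, 0 ≤ κ s → 0 < K s := by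
    intro s hs hk
    rw [hκ] at hk
    have h1 := hX' s hs
    have h2 := (abs_lt.mp (hY' s hs)).2
    have h3 := hZ' s hs
    have hX0 := hXpos s hs
    have hY0 := hYpos s hs
    have hZ0 := hZpos s hs
    simp only [hKdef]
    nlinarith [mul_lt_mul_of_pos_left h1 hη, mul_nonneg hε0.le hk,
      mul_nonneg (mul_nonneg hη.le hε0.le) hk, mul_nonneg hcone.le hX0,
      mul_nonneg hε0.le hZ0]
  have stepA : ∀ s ∈ Set.Icc s' Δ, 0 ≤ κ s := by
    by_contra h
    push_neg at h
    obtain ⟨t0, ht0, ht0κ⟩ := h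
    set T := {s | s ∈ Set.Icc s' Δ ∧ κ s < 0} with hT
    have hTne : T.Nonempty := ⟨t0, ht0, ht0κ⟩
    have hTbdd : BddBelow T := ⟨s', fun t ht => ht.1.1⟩
    set m := sInf T with hm
    have hms' : s' ≤ m := le_csInf hTne fun t ht => ht.1.1
    have hmΔ : m ≤ Δ := le_trans (csInf_le hTbdd ⟨ht0, ht0κ⟩) ht0.2
    have hmIcc : m ∈ Set.Icc (0:ℝ) Δ := ⟨le_trans hs'0 hms', hmΔ⟩
    have hκm_le : κ m ≤ 0 := by
      by_contra hpos
      push_neg at hpos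
      have hcont := (hdκ m hmIcc).continuousAt
      have hpre : κ ⁻¹' Set.Ioi 0 ∈ nhds m := hcont.preimage_mem_nhds (Ioi_mem_nhds hpos)
      obtain ⟨δ, hδ, hball⟩ := Metric.mem_nhds_iff.mp hpre
      obtain ⟨t, htT, htlt⟩ := (csInf_lt_iff hTbdd hTne).mp (by linarith : sInf T < m + δ)
      have hmt : m ≤ t := csInf_le hTbdd htT
      have : t ∈ Metric.ball m δ := by
        rw [Metric.mem_ball, Real.dist_eq, abs_lt]; constructor <;> linarith
      exact absurd (hball this) (by simpa using htT.2.le)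
    have hκm_ge : 0 ≤ κ m := by
      rcases eq_or_lt_of_le hms' with heq | hlt
      · rw [← heq]; exact hκs'
      · have h1 : ∀ u ∈ Set.Ico s' m, 0 ≤ κ u := by
          intro u hu
          by_contra hneg
          push_neg at hneg
          exact absurd (csInf_le hTbdd ⟨⟨hu.1, le_trans hu.2.le hmΔ⟩, hneg⟩)
            (not_le.mpr hu.2)
        have hcont : Filter.Tendsto κ (nhdsWithin m (Set.Iio m)) (nhds (κ m)) :=
          ((hdκ m hmIcc).continuousAt.continuousWithinAt).tendsto
        refine ge_of_tendsto hcont ?_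
        filter_upwards [Ico_mem_nhdsLT_of_mem (⟨hlt, le_refl m⟩ : m ∈ Set.Ioc s' m)]
          with u hu using h1 u hu
    have hκm : κ m = 0 := le_antisymm hκm_le hκm_ge
    have hKm : 0 < K m := hKpos m hmIcc hκm_ge
    have hslope : Filter.Tendsto (slope κ m) (nhdsWithin m {m}ᶜ) (nhds (K m)) :=
      hasDerivAt_iff_tendsto_slope.mp (hdκ m hmIcc)
    have hslope' : ∀ᶠ u in nhdsWithin m (Set.Ioi m), 0 < slope κ m u :=
      (hslope.mono_left (nhdsWithin_mono m fun u hu => ne_of_gt hu)).eventually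
        (eventually_gt_nhds hKm)
    obtain ⟨c, hc, hsub⟩ := mem_nhdsGT_iff_exists_Ioc_subset.mp hslope'
    obtain ⟨t, htT, htlt⟩ := (csInf_lt_iff hTbdd hTne).mp (hc : sInf T < c)
    have hmt : m ≤ t := csInf_le hTbdd htT
    have hmt' : m < t := lt_of_le_of_ne hmt (by rintro rfl; exact absurd hκm (ne_of_lt htT.2))
    have hst : 0 < slope κ m t := hsub ⟨hmt', htlt.le⟩
    rw [slope_def_field, hκm] at hst
    have : 0 < κ t := by
      have := (div_pos_iff.mp (by simpa using hst))
      rcases this with ⟨ha, _⟩ | ⟨_, hb⟩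
      · linarith
      · linarith
    linarith [htT.2]
  have hcontκ : ContinuousOn κ (Set.Icc s' Δ) := fun s hs =>
    ((hdκ s ⟨le_trans hs'0 hs.1, hs.2⟩).continuousAt).continuousWithinAt
  have hmono : StrictMonoOn κ (Set.Icc s' Δ) := by
    apply strictMonoOn_of_deriv_pos (convex_Icc s' Δ) hcontκ
    intro x hx
    rw [interior_Icc] at hx
    have hxIcc : x ∈ Set.Icc (0:ℝ) Δ := ⟨le_trans hs'0 hx.1.le, hx.2.le⟩
    rw [(hdκ x hxIcc).deriv]
    exact hKpos x hxIcc (stepA x ⟨hx.1.le, hx.2.le⟩)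
  intro s hs
  have := hmono (Set.left_mem_Icc.mpr hs'Δ) ⟨hs.1.le, hs.2⟩ hs.1
  linarith
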